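/- arXiv:2306.08465 — 3 statements merged into one kernel-verified Lean document; each statement's English description precedes it below -/
import Mathlib

section
/- Fix an integer n ≥ 2, a complex number s, positive reals γ₁,…,γₙ and nonzero complex numbers γ̂₁,…,γ̂ₙ, and complex numbers u₀,…,uₙ satisfying, for all j = 1,…,n−1, the second-order finite-difference relation (u_{j+1} − u_j)/γ_{j+1} − (u_j − u_{j−1})/γ_j = s²·γ̂_{j+1}·u_j. Define grid points x₀ = 0 and x_i = γ₁ + ⋯ + γ_i for i = 1,…,n. Then for every interior index i ∈ {1,…,n−1} and every continuously differentiable function φ : ℝ → ℂ that vanishes outside a compact subset of the open interval (x_{i−1}, x_{i+1}), one has ∫_{x_{i−1}}^{x_i} ((u_i − u_{i−1})/γ_i)·φ'(x) dx + ∫_{x_i}^{x_{i+1}} ((u_{i+1} − u_i)/γ_{i+1})·φ'(x) dx = −s²·γ̂_{i+1}·u_i·φ(x_i). -/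
open intervalIntegral

/-- Proposition 1 (Kac–Krein) in weak form: the piecewise linear interpolant of
the finite-difference solution is a weak solution of `u'' - s² Mₙ u = 0` with the
discrete mass function `Mₙ(x) = Σ γ̂_{i+1} δ(x - x_i)`. -/
theorem stmt1 (n : ℕ) (hn : 2 ≤ n) (s : ℂ)
    (γ : ℕ → ℝ) (hγ : ∀ j, 1 ≤ j → j ≤ n → 0 < γ j)
    (γhat : ℕ → ℂ) (hγhat : ∀ j, 1 ≤ j → j ≤ n → γhat j ≠ 0)
    (u : ℕ → ℂ)
    (hu : ∀ j, 1 ≤ j → j ≤ n - 1 →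
      (u (j + 1) - u j) / (γ (j + 1) : ℂ) - (u j - u (j - 1)) / (γ j : ℂ)
        = s ^ 2 * γhat (j + 1) * u j)
    (x : ℕ → ℝ) (hx : ∀ i, x i = ∑ k ∈ Finset.Icc 1 i, γ k) :
    ∀ i, 1 ≤ i → i ≤ n - 1 → ∀ φ : ℝ → ℂ, ContDiff ℝ 1 φ →
      HasCompactSupport φ → tsupport φ ⊆ Set.Ioo (x (i - 1)) (x (i + 1)) →
      (∫ t in (x (i - 1))..(x i), ((u i - u (i - 1)) / (γ i : ℂ)) * deriv φ t) +
        (∫ t in (x i)..(x (i + 1)), ((u (i + 1) - u i) / (γ (i + 1) : ℂ)) * deriv φ t)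
          = -(s ^ 2) * γhat (i + 1) * u i * φ (x i) := by
  intro i hi1 hi2 φ hφ hφc hφs
  have hdiff : Differentiable ℝ φ := hφ.differentiable one_ne_zero
  have hint : ∀ a b : ℝ, IntervalIntegrable (deriv φ) MeasureTheory.volume a b :=
    fun a b => (hφ.continuous_deriv le_rfl).intervalIntegrable a b
  have h1 : ∫ t in (x (i - 1))..(x i), deriv φ t = φ (x i) - φ (x (i - 1)) :=
    intervalIntegral.integral_deriv_eq_sub (fun t _ => hdiff t) (hint _ _)
  have h2 : ∫ t in (x i)..(x (i + 1)), deriv φ t = φ (x (i + 1)) - φ (x i) :=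
    intervalIntegral.integral_deriv_eq_sub (fun t _ => hdiff t) (hint _ _)
  have hz1 : φ (x (i - 1)) = 0 := by
    apply image_eq_zero_of_notMem_tsupport
    intro h
    exact lt_irrefl _ (hφs h).1
  have hz2 : φ (x (i + 1)) = 0 := by
    apply image_eq_zero_of_notMem_tsupport
    intro h
    exact lt_irrefl _ (hφs h).2
  rw [intervalIntegral.integral_const_mul, intervalIntegral.integral_const_mul,
    h1, h2, hz1, hz2]
  linear_combination (-(φ (x i))) * (hu i hi1 hi2)
end

section
/- Let μ be a finite nonnegative Borel measure on ℝ whose support is contained in (−∞, 0], and define h(s) = s·∫ (s² − z)⁻¹ dμ(z) for s in the open right half-plane. Then for every s ∈ ℂ with Re(s) > 0, Re(h(s)) ≥ 0; moreover, if μ is not the zero measure then Re(h(s)) > 0. (The key pointwise fact is that for every real a ≥ 0 and every s with Re(s) > 0, Re(s/(s² + a)) > 0.) -/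
open MeasureTheory

lemma key_pt (a : ℝ) (ha : 0 ≤ a) (s : ℂ) (hs : 0 < s.re) :
    0 < (s / (s ^ 2 + (a : ℂ))).re := by
  have hw : s ^ 2 + (a : ℂ) ≠ 0 := by
    intro h0
    have e1 : (s ^ 2 + (a : ℂ)).im = 2 * s.re * s.im := by
      simp [pow_two, Complex.mul_im]; ring
    have e2 : (s ^ 2 + (a : ℂ)).re = s.re ^ 2 - s.im ^ 2 + a := by
      simp [pow_two, Complex.mul_re]
    rw [h0] at e1 e2
    simp only [Complex.zero_im, Complex.zero_re] at e1 e2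
    have hy : s.im = 0 := by nlinarith
    nlinarith
  have hns : 0 < Complex.normSq (s ^ 2 + (a : ℂ)) := Complex.normSq_pos.mpr hw
  rw [Complex.div_re, ← add_div]
  apply div_pos _ hns
  have h1 : (s ^ 2 + (a : ℂ)).re = s.re ^ 2 - s.im ^ 2 + a := by
    simp [pow_two, Complex.mul_re]
  have h2 : (s ^ 2 + (a : ℂ)).im = 2 * s.re * s.im := by
    simp [pow_two, Complex.mul_im]; ring
  rw [h1, h2]
  nlinarith [mul_pos hs (mul_pos hs hs), mul_nonneg hs.le (sq_nonneg s.im), mul_nonneg hs.le ha]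

/-- Passivity of `h(s) = s ∫ (s² - z)⁻¹ dμ(z)` for a finite nonnegative measure
`μ` supported on `(-∞, 0]`: `Re h(s) ≥ 0` on the open right half-plane, with
strict inequality when `μ ≠ 0`.  The key pointwise fact is that
`Re (s / (s² + a)) > 0` for every real `a ≥ 0` and every `s` with `Re s > 0`. -/
theorem stmt12 (μ : Measure ℝ) [IsFiniteMeasure μ]
    (hsupp : μ (Set.Ioi 0) = 0)
    (h : ℂ → ℂ)
    (hh : ∀ s : ℂ, h s = s * ∫ z, (s ^ 2 - (z : ℂ))⁻¹ ∂μ) :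
    (∀ s : ℂ, 0 < s.re → 0 ≤ (h s).re ∧ (μ ≠ 0 → 0 < (h s).re)) ∧
      (∀ a : ℝ, 0 ≤ a → ∀ s : ℂ, 0 < s.re →
        0 < (s / (s ^ 2 + (a : ℂ))).re) := by
  refine ⟨?_, fun a ha s hs => key_pt a ha s hs⟩
  intro s hs
  have hae : ∀ᵐ z ∂μ, z ≤ 0 := by
    rw [ae_iff]
    convert hsupp using 2
    ext z; simp [Set.mem_Ioi]
  have hpos : ∀ z : ℝ, z ≤ 0 → 0 < (s * (s ^ 2 - (z : ℂ))⁻¹).re := by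
    intro z hz
    have := key_pt (-z) (by linarith) s hs
    rw [div_eq_mul_inv] at this
    convert this using 4
    · rfl
    · push_cast; ring
  -- lower bound on |s^2 - z|
  have hcb : ∃ c > (0:ℝ), ∀ z : ℝ, z ≤ 0 → c ≤ ‖s ^ 2 - (z:ℂ)‖ := by
    by_cases hu : 0 ≤ (s ^ 2).re
    · refine ⟨‖s ^ 2‖, ?_, ?_⟩
      · have hs0 : s ≠ 0 := fun h0 => by simp [h0] at hs
        simpa using (norm_pos_iff.mpr (pow_ne_zero 2 hs0))
      · intro z hz
        have h1 : Complex.normSq (s ^ 2) ≤ Complex.normSq (s ^ 2 - z) := by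
          have hre : (s ^ 2 - (z:ℂ)).re = (s ^ 2).re - z := by simp
          have him : (s ^ 2 - (z:ℂ)).im = (s ^ 2).im := by simp
          rw [Complex.normSq_apply, Complex.normSq_apply, hre, him]
          nlinarith
        rw [Complex.norm_def, Complex.norm_def]
        exact Real.sqrt_le_sqrt h1
    · push_neg at hu
      refine ⟨|(s ^ 2).im|, ?_, ?_⟩
      · refine abs_pos.mpr fun hv => ?_
        have h2 : (s ^ 2).im = 2 * s.re * s.im := by
          simp [pow_two, Complex.mul_im]; ring
        have hre2 : (s ^ 2).re = s.re ^ 2 - s.im ^ 2 := by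
          simp [pow_two, Complex.mul_re]
        rw [h2] at hv
        have hy : s.im = 0 := by nlinarith
        rw [hre2, hy] at hu
        nlinarith
      · intro z hz
        have him : (s ^ 2 - (z:ℂ)).im = (s ^ 2).im := by simp
        have := Complex.abs_im_le_norm (s ^ 2 - z)
        rwa [him] at this
  obtain ⟨c, hc, hbound⟩ := hcb
  have hmeas : AEStronglyMeasurable (fun z : ℝ => (s ^ 2 - (z : ℂ))⁻¹) μ :=
    ((measurable_const.sub Complex.measurable_ofReal).inv).aestronglyMeasurable
  have hint : Integrable (fun z : ℝ => (s ^ 2 - (z : ℂ))⁻¹) μ := by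
    apply Integrable.mono' (integrable_const c⁻¹) hmeas
    filter_upwards [hae] with z hz
    rw [norm_inv]
    exact inv_anti₀ hc (hbound z hz)
  have hintF : Integrable (fun z : ℝ => s * (s ^ 2 - (z : ℂ))⁻¹) μ := hint.const_mul s
  have hre : (h s).re = ∫ z, (s * (s ^ 2 - (z : ℂ))⁻¹).re ∂μ := by
    rw [hh, ← integral_const_mul]
    exact (Complex.reCLM.integral_comp_comm hintF).symm
  have hnn : 0 ≤ᵐ[μ] fun z : ℝ => (s * (s ^ 2 - (z : ℂ))⁻¹).re := by
    filter_upwards [hae] with z hz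
    exact (hpos z hz).le
  constructor
  · rw [hre]; exact integral_nonneg_of_ae hnn
  · intro hμ
    rw [hre, integral_pos_iff_support_of_nonneg_ae hnn hintF.re]
    have hsub : Set.Iic (0:ℝ) ⊆ Function.support (fun z : ℝ => (s * (s ^ 2 - (z : ℂ))⁻¹).re) :=
      fun z hz => (hpos z hz).ne'
    have huniv : μ (Set.Iic 0) = μ Set.univ := by
      have := measure_compl (measurableSet_Ioi (a := (0:ℝ))) (measure_ne_top μ _)
      rw [hsupp, tsub_zero] at this
      simpa using this
    calc (0:ENNReal) < μ Set.univ := by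
          rw [pos_iff_ne_zero]; exact Measure.measure_univ_ne_zero.mpr hμ
      _ = μ (Set.Iic 0) := huniv.symm
      _ ≤ _ := measure_mono hsub
end

section
/- Let ρ : ℝ → ℝ be a nonnegative Lebesgue-integrable function vanishing on (0, ∞), define f(λ) = ∫_{−∞}^{0} ρ(z)/(λ − z) dz for λ ∈ ℂ ∖ (−∞, 0], and set h(s) = s·f(s²). Let ω be a nonzero real number such that ρ is continuous at the point −ω². Then lim_{ε → 0⁺} Re( h(ε + iω) ) = π·|ω|·ρ(−ω²). In particular, whenever ρ(−ω²) > 0 this boundary limit of the real part of h is strictly positive. -/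
open MeasureTheory Filter

namespace Stmt14Aux

/-- The Poisson-type kernel. -/
noncomputable def K (ω ε z : ℝ) : ℝ :=
  ε * (ε ^ 2 + ω ^ 2 - z) / ((ε ^ 2 - ω ^ 2 - z) ^ 2 + 4 * ε ^ 2 * ω ^ 2)

/-- The antiderivative of the kernel in `z`. -/
noncomputable def F (ω ε z : ℝ) : ℝ :=
  -(ε / 2) * Real.log ((ε ^ 2 - ω ^ 2 - z) ^ 2 + 4 * ε ^ 2 * ω ^ 2)
    - |ω| * Real.arctan ((ε ^ 2 - ω ^ 2 - z) / (2 * ε * |ω|))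

lemma denom_pos {ω ε : ℝ} (hω : ω ≠ 0) (hε : 0 < ε) (z : ℝ) :
    0 < (ε ^ 2 - ω ^ 2 - z) ^ 2 + 4 * ε ^ 2 * ω ^ 2 := by positivity

lemma K_nonneg {ω ε : ℝ} (hω : ω ≠ 0) (hε : 0 < ε) {z : ℝ} (hz : z ≤ 0) :
    0 ≤ K ω ε z := by
  have hD := denom_pos hω hε z
  have hN : 0 ≤ ε * (ε ^ 2 + ω ^ 2 - z) := by nlinarith [sq_nonneg ε, sq_nonneg ω]
  exact div_nonneg hN hD.le

lemma aux_bd (ε w u : ℝ) (hε : 0 < ε) (hw : 0 < w) :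
    ε * (u + 2 * w ^ 2) / (u ^ 2 + 4 * ε ^ 2 * w ^ 2) ≤ 1 / (4 * w) + 1 / (2 * ε) := by
  rw [div_le_iff₀ (by positivity), div_add_div _ _ (by positivity) (by positivity),
    div_mul_eq_mul_div, le_div_iff₀ (by positivity)]
  nlinarith [mul_nonneg hε.le (sq_nonneg (u - 2 * ε * w)), mul_nonneg hw.le (sq_nonneg u),
    mul_pos hε hw, sq_nonneg u]

/-- Global bound, uniform in `z`, used for integrability. -/
lemma abs_K_le {ω ε : ℝ} (hω : ω ≠ 0) (hε : 0 < ε) (z : ℝ) :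
    |K ω ε z| ≤ 1 / (4 * |ω|) + 1 / (2 * ε) := by
  have hw : 0 < |ω| := abs_pos.2 hω
  have hD := denom_pos hω hε z
  rw [K, abs_div, abs_of_pos hD]
  have h1 : |ε * (ε ^ 2 + ω ^ 2 - z)| ≤ ε * (|ε ^ 2 - ω ^ 2 - z| + 2 * |ω| ^ 2) := by
    rw [abs_mul, abs_of_pos hε]
    have : ε ^ 2 + ω ^ 2 - z = (ε ^ 2 - ω ^ 2 - z) + 2 * ω ^ 2 := by ring
    rw [this]
    have h2 := abs_add_le (ε ^ 2 - ω ^ 2 - z) (2 * ω ^ 2)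
    have h3 : |2 * ω ^ 2| = 2 * |ω| ^ 2 := by
      rw [abs_mul, sq_abs, abs_of_nonneg (sq_nonneg ω)]; norm_num
    gcongr
    rw [← h3]; exact h2.trans_eq (by rw [h3])
  calc |ε * (ε ^ 2 + ω ^ 2 - z)| / ((ε ^ 2 - ω ^ 2 - z) ^ 2 + 4 * ε ^ 2 * ω ^ 2)
      ≤ (ε * (|ε ^ 2 - ω ^ 2 - z| + 2 * |ω| ^ 2)) /
          ((ε ^ 2 - ω ^ 2 - z) ^ 2 + 4 * ε ^ 2 * ω ^ 2) := by gcongr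
    _ = ε * (|ε ^ 2 - ω ^ 2 - z| + 2 * |ω| ^ 2) /
          (|ε ^ 2 - ω ^ 2 - z| ^ 2 + 4 * ε ^ 2 * |ω| ^ 2) := by
        rw [sq_abs, sq_abs]
    _ ≤ 1 / (4 * |ω|) + 1 / (2 * ε) := aux_bd ε |ω| _ hε hw

lemma aux_far (ε η c t D N : ℝ) (hε : 0 < ε) (hη : 0 < η) (hc : 0 ≤ c) (htη : η ≤ t)
    (hDt : η * t / 4 ≤ D) (hD : 0 < D) (hN : N ≤ ε * (c + t)) :
    N / D ≤ ε * (4 * (c + η) / η ^ 2) := by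
  have ht : 0 < t := hη.trans_le htη
  rw [div_le_iff₀ hD]
  have k1 : ε * (4 * (c + η) / η ^ 2) * (η * t / 4) ≤ ε * (4 * (c + η) / η ^ 2) * D := by
    gcongr
  have k2 : ε * (4 * (c + η) / η ^ 2) * (η * t / 4) = ε * (c + η) * t / η := by
    field_simp
  have k3 : ε * (c + t) ≤ ε * (c + η) * t / η := by
    rw [le_div_iff₀ hη]
    nlinarith [mul_nonneg (mul_nonneg hε.le hc) (sub_nonneg.2 htη)]
  linarith

/-- Bound away from the singular point, of size `O(ε)`. -/
lemma K_le_far {ω ε η : ℝ} (hω : ω ≠ 0) (hε : 0 < ε) (hη : 0 < η)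
    (hε2 : ε ^ 2 ≤ η / 2) {z : ℝ} (hfar : η ≤ |z + ω ^ 2|) :
    K ω ε z ≤ ε * (4 * (η / 2 + 2 * ω ^ 2 + η) / η ^ 2) := by
  have hD := denom_pos hω hε z
  set t := |z + ω ^ 2| with ht
  have h1 : -(z + ω ^ 2) ≤ t := neg_le_abs _
  have h2 : z + ω ^ 2 ≤ t := le_abs_self _
  have hu : t - ε ^ 2 ≤ |ε ^ 2 - (z + ω ^ 2)| := by
    have := abs_sub_abs_le_abs_sub (z + ω ^ 2) (ε ^ 2 : ℝ)
    have h3 : |(ε : ℝ) ^ 2| = ε ^ 2 := abs_of_nonneg (sq_nonneg ε)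
    have h4 : |z + ω ^ 2 - ε ^ 2| = |ε ^ 2 - (z + ω ^ 2)| := abs_sub_comm _ _
    linarith
  have hDt : η * t / 4 ≤ (ε ^ 2 - ω ^ 2 - z) ^ 2 + 4 * ε ^ 2 * ω ^ 2 := by
    have h5 : (ε ^ 2 - ω ^ 2 - z) ^ 2 = |ε ^ 2 - (z + ω ^ 2)| ^ 2 := by
      rw [sq_abs]; ring
    nlinarith [sq_nonneg (ε * ω), abs_nonneg (ε ^ 2 - (z + ω ^ 2))]
  rw [K]
  exact aux_far ε η (η / 2 + 2 * ω ^ 2) t _ _ hε hη (by positivity) hfar hDt hD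
    (by nlinarith)

lemma K_continuous {ω ε : ℝ} (hω : ω ≠ 0) (hε : 0 < ε) :
    Continuous (fun z => K ω ε z) := by
  apply Continuous.div (by continuity) (by continuity)
  exact fun z => (denom_pos hω hε z).ne'

lemma integrable_mul_K {ω ε : ℝ} (hω : ω ≠ 0) (hε : 0 < ε) (g : ℝ → ℝ)
    (hg : Integrable g) : Integrable (fun z => g z * K ω ε z) := by
  have h2 := Integrable.bdd_mul hg ((K_continuous hω hε).aestronglyMeasurable)
    (c := 1 / (4 * |ω|) + 1 / (2 * ε)) (Eventually.of_forall fun z => by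
      rw [Real.norm_eq_abs]; exact abs_K_le hω hε z)
  exact h2.congr (Eventually.of_forall fun x => mul_comm _ _)

lemma hasDerivAt_F {ω ε : ℝ} (hω : ω ≠ 0) (hε : 0 < ε) (z : ℝ) :
    HasDerivAt (F ω ε) (K ω ε z) z := by
  have hw : 0 < |ω| := abs_pos.2 hω
  have hD := denom_pos hω hε z
  have ha : (0 : ℝ) < 2 * ε * |ω| := by positivity
  have hu : HasDerivAt (fun z : ℝ => ε ^ 2 - ω ^ 2 - z) (-1) z := by
    simpa using ((hasDerivAt_id z).const_sub (ε ^ 2 - ω ^ 2))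
  have hDz : HasDerivAt (fun z : ℝ => (ε ^ 2 - ω ^ 2 - z) ^ 2 + 4 * ε ^ 2 * ω ^ 2)
      (2 * (ε ^ 2 - ω ^ 2 - z) * (-1)) z := by
    simpa using ((hu.pow 2).add_const (4 * ε ^ 2 * ω ^ 2))
  have hlog : HasDerivAt
      (fun z : ℝ => Real.log ((ε ^ 2 - ω ^ 2 - z) ^ 2 + 4 * ε ^ 2 * ω ^ 2))
      ((2 * (ε ^ 2 - ω ^ 2 - z) * (-1)) / ((ε ^ 2 - ω ^ 2 - z) ^ 2 + 4 * ε ^ 2 * ω ^ 2)) z :=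
    hDz.log hD.ne'
  have hq : HasDerivAt (fun z : ℝ => (ε ^ 2 - ω ^ 2 - z) / (2 * ε * |ω|))
      (-1 / (2 * ε * |ω|)) z := hu.div_const _
  have harc : HasDerivAt
      (fun z : ℝ => Real.arctan ((ε ^ 2 - ω ^ 2 - z) / (2 * ε * |ω|)))
      ((-1 / (2 * ε * |ω|)) / (1 + ((ε ^ 2 - ω ^ 2 - z) / (2 * ε * |ω|)) ^ 2)) z := by
    simpa [div_eq_mul_inv, mul_comm] using hq.arctan
  have := ((hlog.const_mul (-(ε / 2))).sub (harc.const_mul |ω|))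
  convert this using 1
  · rfl
  · rfl
  · rfl
  rw [K]
  have h1 : (1 + ((ε ^ 2 - ω ^ 2 - z) / (2 * ε * |ω|)) ^ 2) ≠ 0 := by positivity
  rw [show ω ^ 2 = |ω| ^ 2 from (sq_abs ω).symm]
  clear this harc hq hlog hDz hu ha hD h1 hω
  generalize hg : |ω| = w at hw ⊢
  have hD' : 0 < (ε ^ 2 - w ^ 2 - z) ^ 2 + 4 * ε ^ 2 * w ^ 2 := by positivity
  have h1' : (1 + ((ε ^ 2 - w ^ 2 - z) / (2 * ε * w)) ^ 2) ≠ 0 := by positivity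
  field_simp
  ring

/-- The value of the real part of the integrand. -/
lemma re_eq {ω ε : ℝ} (hω : ω ≠ 0) (hε : 0 < ε) (r z : ℝ) :
    (((ε : ℂ) + (ω : ℂ) * Complex.I) *
      ((r : ℂ) / (((ε : ℂ) + (ω : ℂ) * Complex.I) ^ 2 - (z : ℂ)))).re
      = r * K ω ε z := by
  have hD := denom_pos hω hε z
  rw [mul_div_assoc']
  rw [Complex.div_re]
  have hb : (((ε : ℂ) + (ω : ℂ) * Complex.I) ^ 2 - (z : ℂ)).re = ε ^ 2 - ω ^ 2 - z := by
    simp [pow_two, Complex.mul_re, Complex.add_re, Complex.add_im]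
    try ring
  have hb' : (((ε : ℂ) + (ω : ℂ) * Complex.I) ^ 2 - (z : ℂ)).im = 2 * ε * ω := by
    simp [pow_two, Complex.mul_im, Complex.add_re, Complex.add_im]
    ring
  have ha : (((ε : ℂ) + (ω : ℂ) * Complex.I) * (r : ℂ)).re = ε * r := by
    simp [Complex.mul_re]
  have ha' : (((ε : ℂ) + (ω : ℂ) * Complex.I) * (r : ℂ)).im = ω * r := by
    simp [Complex.mul_im]
  rw [Complex.normSq_apply, ha, ha', hb, hb']
  rw [K, mul_div_assoc']
  have h1 : (ε ^ 2 - ω ^ 2 - z) * (ε ^ 2 - ω ^ 2 - z) + 2 * ε * ω * (2 * ε * ω) ≠ 0 := by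
    have he : (ε ^ 2 - ω ^ 2 - z) * (ε ^ 2 - ω ^ 2 - z) + 2 * ε * ω * (2 * ε * ω)
        = (ε ^ 2 - ω ^ 2 - z) ^ 2 + 4 * ε ^ 2 * ω ^ 2 := by ring
    rw [he]; exact hD.ne'
  rw [← add_div, div_eq_div_iff h1 hD.ne']
  ring

/-- FTC evaluation of the kernel integral over an interval. -/
lemma integral_K {ω ε : ℝ} (hω : ω ≠ 0) (hε : 0 < ε) (a b : ℝ) :
    ∫ z in a..b, K ω ε z = F ω ε b - F ω ε a := by
  apply intervalIntegral.integral_eq_sub_of_hasDerivAt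
    (fun x _ => hasDerivAt_F hω hε x)
  exact ((K_continuous hω hε).intervalIntegrable a b)

lemma tendsto_log_term {ω η : ℝ} (hη : 0 < η) (c : ℝ) (hc : c = η ∨ c = -η) :
    Tendsto (fun ε : ℝ => -(ε / 2) * Real.log ((ε ^ 2 - c) ^ 2 + 4 * ε ^ 2 * ω ^ 2))
      (nhdsWithin 0 (Set.Ioi 0)) (nhds 0) := by
  have hc0 : c ≠ 0 := by rcases hc with rfl | rfl <;> simp [hη.ne', hη.ne]
  have c1 : ContinuousAt (fun ε : ℝ => -(ε / 2) *
      Real.log ((ε ^ 2 - c) ^ 2 + 4 * ε ^ 2 * ω ^ 2)) 0 := by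
    apply ContinuousAt.mul (by fun_prop)
    apply ContinuousAt.log (by fun_prop)
    norm_num
    positivity
  exact tendsto_nhdsWithin_of_tendsto_nhds (by simpa using c1.tendsto)

lemma tendsto_arg_bot {ω η : ℝ} (hω : ω ≠ 0) (hη : 0 < η) :
    Tendsto (fun ε : ℝ => (ε ^ 2 - η) / (2 * ε * |ω|))
      (nhdsWithin 0 (Set.Ioi 0)) atBot := by
  have hw : 0 < |ω| := abs_pos.2 hω
  have hmodel : Tendsto (fun ε : ℝ => ε / (2 * |ω|) + (-(η / (2 * |ω|))) * ε⁻¹)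
      (nhdsWithin 0 (Set.Ioi 0)) atBot := by
    apply tendsto_atBot_add_left_of_ge' _ 1
    · have : Tendsto (fun ε : ℝ => ε / (2 * |ω|)) (nhdsWithin 0 (Set.Ioi 0)) (nhds 0) := by
        have hco : ContinuousAt (fun ε : ℝ => ε / (2 * |ω|)) 0 := by fun_prop
        exact tendsto_nhdsWithin_of_tendsto_nhds (by simpa using hco.tendsto)
      exact this.eventually_le_const one_pos
    · exact Tendsto.const_mul_atTop_of_neg (neg_lt_zero.mpr (by positivity))
        tendsto_inv_nhdsGT_zero
  apply hmodel.congr'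
  filter_upwards [self_mem_nhdsWithin] with ε (hε : 0 < ε)
  field_simp
  ring

lemma tendsto_arg_top {ω η : ℝ} (hω : ω ≠ 0) (hη : 0 < η) :
    Tendsto (fun ε : ℝ => (ε ^ 2 + η) / (2 * ε * |ω|))
      (nhdsWithin 0 (Set.Ioi 0)) atTop := by
  have hw : 0 < |ω| := abs_pos.2 hω
  have hmodel : Tendsto (fun ε : ℝ => ε / (2 * |ω|) + (η / (2 * |ω|)) * ε⁻¹)
      (nhdsWithin 0 (Set.Ioi 0)) atTop := by
    apply tendsto_atTop_add_left_of_le' _ 0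
    · filter_upwards [self_mem_nhdsWithin] with ε (hε : 0 < ε)
      positivity
    · exact Tendsto.const_mul_atTop (by positivity) tendsto_inv_nhdsGT_zero
  apply hmodel.congr'
  filter_upwards [self_mem_nhdsWithin] with ε (hε : 0 < ε)
  field_simp

/-- The mass of the kernel over the window tends to `π |ω|`. -/
lemma tendsto_mass {ω η : ℝ} (hω : ω ≠ 0) (hη : 0 < η) :
    Tendsto (fun ε : ℝ => ∫ z in (-ω ^ 2 - η)..(-ω ^ 2 + η), K ω ε z)
      (nhdsWithin 0 (Set.Ioi 0)) (nhds (Real.pi * |ω|)) := by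
  have hcong : (fun ε : ℝ => F ω ε (-ω ^ 2 + η) - F ω ε (-ω ^ 2 - η))
      =ᶠ[nhdsWithin 0 (Set.Ioi 0)]
      (fun ε : ℝ => ∫ z in (-ω ^ 2 - η)..(-ω ^ 2 + η), K ω ε z) := by
    filter_upwards [self_mem_nhdsWithin] with ε (hε : 0 < ε)
    exact (integral_K hω hε _ _).symm
  apply Tendsto.congr' hcong
  have e1 : ∀ ε : ℝ, F ω ε (-ω ^ 2 + η) =
      -(ε / 2) * Real.log ((ε ^ 2 - η) ^ 2 + 4 * ε ^ 2 * ω ^ 2)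
        - |ω| * Real.arctan ((ε ^ 2 - η) / (2 * ε * |ω|)) := by
    intro ε
    rw [F, show ε ^ 2 - ω ^ 2 - (-ω ^ 2 + η) = ε ^ 2 - η by ring]
  have e2 : ∀ ε : ℝ, F ω ε (-ω ^ 2 - η) =
      -(ε / 2) * Real.log ((ε ^ 2 + η) ^ 2 + 4 * ε ^ 2 * ω ^ 2)
        - |ω| * Real.arctan ((ε ^ 2 + η) / (2 * ε * |ω|)) := by
    intro ε
    rw [F, show ε ^ 2 - ω ^ 2 - (-ω ^ 2 - η) = ε ^ 2 + η by ring]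
  simp only [e1, e2]
  have harc1 : Tendsto (fun ε : ℝ => Real.arctan ((ε ^ 2 - η) / (2 * ε * |ω|)))
      (nhdsWithin 0 (Set.Ioi 0)) (nhds (-(Real.pi / 2))) :=
    (Real.tendsto_arctan_atBot.mono_right nhdsWithin_le_nhds).comp (tendsto_arg_bot hω hη)
  have harc2 : Tendsto (fun ε : ℝ => Real.arctan ((ε ^ 2 + η) / (2 * ε * |ω|)))
      (nhdsWithin 0 (Set.Ioi 0)) (nhds (Real.pi / 2)) :=
    (Real.tendsto_arctan_atTop.mono_right nhdsWithin_le_nhds).comp (tendsto_arg_top hω hη)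
  have T1 := tendsto_log_term (ω := ω) hη η (Or.inl rfl)
  have T2' := tendsto_log_term (ω := ω) hη (-η) (Or.inr rfl)
  have T2 : Tendsto (fun ε : ℝ => -(ε / 2) * Real.log ((ε ^ 2 + η) ^ 2 + 4 * ε ^ 2 * ω ^ 2))
      (nhdsWithin 0 (Set.Ioi 0)) (nhds 0) := by
    simpa [sub_neg_eq_add] using T2'
  have := (T1.sub (harc1.const_mul |ω|)).sub (T2.sub (harc2.const_mul |ω|))
  convert this using 2
  ring

end Stmt14Aux

open Stmt14Aux

set_option maxHeartbeats 1000000 in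
/-- Boundary values of the transfer function: for the Stieltjes function
`f(λ) = ∫_{-∞}^0 ρ(z)/(λ - z) dz` with nonnegative integrable density `ρ`
vanishing on `(0, ∞)`, the transfer function `h(s) = s f(s²)` satisfies
`lim_{ε→0⁺} Re h(ε + iω) = π |ω| ρ(-ω²)` at every nonzero real `ω` where `ρ`
is continuous at `-ω²`; in particular this limit is positive whenever
`ρ(-ω²) > 0`. -/
theorem stmt14 (ρ : ℝ → ℝ) (hρ0 : ∀ z, 0 ≤ ρ z) (hρint : Integrable ρ)
    (hρsupp : ∀ z > 0, ρ z = 0)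
    (f : ℂ → ℂ)
    (hf : ∀ l : ℂ, f l = ∫ z in Set.Iic (0 : ℝ), (ρ z : ℂ) / (l - (z : ℂ)))
    (h : ℂ → ℂ) (hh : ∀ s : ℂ, h s = s * f (s ^ 2))
    (ω : ℝ) (hω : ω ≠ 0) (hcont : ContinuousAt ρ (-ω ^ 2)) :
    Tendsto (fun ε : ℝ => (h ((ε : ℂ) + (ω : ℂ) * Complex.I)).re)
        (nhdsWithin 0 (Set.Ioi 0))
        (nhds (Real.pi * |ω| * ρ (-ω ^ 2))) ∧
      (0 < ρ (-ω ^ 2) → 0 < Real.pi * |ω| * ρ (-ω ^ 2)) := by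
  have hw : 0 < |ω| := abs_pos.2 hω
  have hω2 : 0 < ω ^ 2 := by positivity
  constructor
  · -- the boundary-value limit
    have hre : ∀ ε : ℝ, 0 < ε →
        (h ((ε : ℂ) + (ω : ℂ) * Complex.I)).re
          = ∫ z in Set.Iic (0 : ℝ), ρ z * K ω ε z := by
      intro ε hε
      rw [hh, hf]
      set s : ℂ := (ε : ℂ) + (ω : ℂ) * Complex.I with hsdef
      have him : ∀ z : ℝ, (s ^ 2 - (z : ℂ)).im = 2 * ε * ω := by
        intro z
        simp [hsdef, pow_two, Complex.mul_im, Complex.add_re, Complex.add_im]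
        ring
      have hnorm : ∀ z : ℝ, 2 * ε * |ω| ≤ ‖s ^ 2 - (z : ℂ)‖ := by
        intro z
        have h1 : |(s ^ 2 - (z : ℂ)).im| ≤ ‖s ^ 2 - (z : ℂ)‖ :=
          Complex.abs_im_le_norm _
        have h2 : |(s ^ 2 - (z : ℂ)).im| = 2 * ε * |ω| := by
          rw [him z, abs_mul, abs_mul]
          simp [abs_of_pos hε]
        linarith
      have hmeas : AEStronglyMeasurable (fun z : ℝ => (ρ z : ℂ) / (s ^ 2 - (z : ℂ)))
          (volume.restrict (Set.Iic 0)) := by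
        have hm1 : AEStronglyMeasurable (fun z : ℝ => (ρ z : ℂ))
            (volume.restrict (Set.Iic 0)) :=
          Complex.continuous_ofReal.comp_aestronglyMeasurable
            hρint.aestronglyMeasurable.restrict
        have hc2 : Continuous (fun z : ℝ => s ^ 2 - (z : ℂ)) :=
          continuous_const.sub Complex.continuous_ofReal
        have hm2 : AEStronglyMeasurable (fun z : ℝ => s ^ 2 - (z : ℂ))
            (volume.restrict (Set.Iic 0)) := hc2.aestronglyMeasurable
        exact (hm1.aemeasurable.div hm2.aemeasurable).aestronglyMeasurable
      have hbnd : ∀ z : ℝ, ‖(ρ z : ℂ) / (s ^ 2 - (z : ℂ))‖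
          ≤ ‖ρ z * (1 / (2 * ε * |ω|))‖ := by
        intro z
        rw [norm_div, Complex.norm_real, Real.norm_eq_abs,
          abs_of_nonneg (hρ0 z), Real.norm_eq_abs,
          abs_of_nonneg (mul_nonneg (hρ0 z) (by positivity)),
          mul_one_div]
        exact div_le_div_of_nonneg_left (hρ0 z) (by positivity) (hnorm z)
      have hint : IntegrableOn (fun z : ℝ => (ρ z : ℂ) / (s ^ 2 - (z : ℂ)))
          (Set.Iic 0) := by
        apply Integrable.mono ((hρint.mul_const (1 / (2 * ε * |ω|))).integrableOn) hmeas
        exact Eventually.of_forall hbnd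
      rw [← integral_const_mul]
      have hre2 := integral_re (μ := volume.restrict (Set.Iic 0)) (hint.const_mul s)
      simp only [RCLike.re_to_complex] at hre2
      rw [← hre2]
      apply integral_congr_ae
      exact Eventually.of_forall fun z => re_eq hω hε (ρ z) z
    have hcong : (fun ε : ℝ => ∫ z in Set.Iic (0 : ℝ), ρ z * K ω ε z)
        =ᶠ[nhdsWithin 0 (Set.Ioi 0)]
        (fun ε : ℝ => (h ((ε : ℂ) + (ω : ℂ) * Complex.I)).re) := by
      filter_upwards [self_mem_nhdsWithin] with ε (hε : 0 < ε)
      exact (hre ε hε).symm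
    apply Tendsto.congr' hcong
    -- main approximate-identity argument
    rw [Metric.tendsto_nhds]
    intro δ hδ
    set ρ₀ := ρ (-ω ^ 2) with hρ₀def
    have hρ₀ : 0 ≤ ρ₀ := hρ0 _
    set M := ∫ z, ρ z with hMdef
    have hM0 : 0 ≤ M := integral_nonneg hρ0
    set δ1 := δ / (6 * (Real.pi * |ω| + 1)) with hδ1def
    have hπ : 0 < Real.pi := Real.pi_pos
    have hδ1 : 0 < δ1 := by positivity
    set δ2 := δ / (3 * (ρ₀ + 1)) with hδ2def
    have hδ2 : 0 < δ2 := by positivity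
    -- continuity window
    obtain ⟨η0, hη0pos, hη0⟩ := Metric.continuousAt_iff.1 hcont δ1 hδ1
    set η := min (η0 / 2) (ω ^ 2 / 2) with hηdef
    have hη : 0 < η := lt_min (by positivity) (by positivity)
    have hηω : η < ω ^ 2 := (min_le_right _ _).trans_lt (by linarith)
    have hηη0 : η < η0 := (min_le_left _ _).trans_lt (by linarith)
    set a := -ω ^ 2 - η with hadef
    set b := -ω ^ 2 + η with hbdef
    have hab : a < b := by simp [hadef, hbdef]; linarith
    have hb0 : b < 0 := by simp [hbdef]; linarith
    set Cf := 4 * (η / 2 + 2 * ω ^ 2 + η) / η ^ 2 with hCfdef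
    have hCf : 0 < Cf := by positivity
    -- eventual conditions
    have tid : Tendsto (fun ε : ℝ => ε) (nhdsWithin 0 (Set.Ioi 0)) (nhds 0) :=
      tendsto_nhdsWithin_of_tendsto_nhds tendsto_id
    have tsq : Tendsto (fun ε : ℝ => ε ^ 2) (nhdsWithin 0 (Set.Ioi 0)) (nhds 0) :=
      tendsto_nhdsWithin_of_tendsto_nhds (by simpa using (continuous_pow 2).tendsto (0 : ℝ))
    have tlin : Tendsto (fun ε : ℝ => ε * (Cf * M)) (nhdsWithin 0 (Set.Ioi 0)) (nhds 0) := by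
      simpa using tid.mul_const (Cf * M)
    have Hsq := tsq.eventually_le_const (by positivity : (0:ℝ) < η / 2)
    have Hlin := tlin.eventually_lt_const (by positivity : (0:ℝ) < δ / 6)
    have Hmass := Metric.tendsto_nhds.1 (tendsto_mass hω hη) (min δ2 1)
      (lt_min hδ2 one_pos)
    filter_upwards [self_mem_nhdsWithin, Hsq, Hlin, Hmass] with ε hεmem hε2 hε3 hIεd
    have hε : 0 < ε := hεmem
    set Iε := ∫ z in a..b, K ω ε z with hIεdef
    rw [Real.dist_eq] at hIεd
    have hIεδ2 : abs (Iε - Real.pi * |ω|) < δ2 := hIεd.trans_le (min_le_left _ _)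
    have hIεle : Iε ≤ Real.pi * |ω| + 1 := by
      have h1 : abs (Iε - Real.pi * |ω|) < 1 := hIεd.trans_le (min_le_right _ _)
      have := abs_lt.1 h1
      linarith [this.2]
    have hIεnn : 0 ≤ Iε := by
      apply intervalIntegral.integral_nonneg hab.le
      intro u hu
      exact K_nonneg hω hε (le_trans hu.2 hb0.le)
    -- integrability
    have hKI : Integrable (fun z => ρ z * K ω ε z) := integrable_mul_K hω hε ρ hρint
    have hKc : Integrable (fun z => ρ z * (ε * Cf)) := hρint.mul_const _
    -- splitting the integral
    have hsplit : ∫ z in Set.Iic (0 : ℝ), ρ z * K ω ε z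
        = (∫ z in Set.Iic a, ρ z * K ω ε z) + (∫ z in Set.Ioc a b, ρ z * K ω ε z)
          + (∫ z in Set.Ioc b 0, ρ z * K ω ε z) := by
      have h1 : Set.Iic (0 : ℝ) = Set.Iic b ∪ Set.Ioc b 0 :=
        (Set.Iic_union_Ioc_eq_Iic hb0.le).symm
      have h2 : Set.Iic b = Set.Iic a ∪ Set.Ioc a b :=
        (Set.Iic_union_Ioc_eq_Iic hab.le).symm
      rw [h1, setIntegral_union (Set.Iic_disjoint_Ioc le_rfl) measurableSet_Ioc
        hKI.integrableOn hKI.integrableOn, h2,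
        setIntegral_union (Set.Iic_disjoint_Ioc le_rfl) measurableSet_Ioc
        hKI.integrableOn hKI.integrableOn]
    set A1 := ∫ z in Set.Iic a, ρ z * K ω ε z with hA1def
    set A2 := ∫ z in Set.Ioc a b, ρ z * K ω ε z with hA2def
    set A3 := ∫ z in Set.Ioc b 0, ρ z * K ω ε z with hA3def
    -- far bounds
    have hfarbound : ∀ (S : Set ℝ), MeasurableSet S → (∀ z ∈ S, z ≤ 0 ∧ η ≤ |z + ω ^ 2|) →
        (0 ≤ ∫ z in S, ρ z * K ω ε z) ∧ (∫ z in S, ρ z * K ω ε z) ≤ ε * (Cf * M) := by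
      intro S hS hSprop
      constructor
      · apply setIntegral_nonneg hS
        intro z hz
        exact mul_nonneg (hρ0 z) (K_nonneg hω hε (hSprop z hz).1)
      · calc (∫ z in S, ρ z * K ω ε z) ≤ ∫ z in S, ρ z * (ε * Cf) := by
              apply setIntegral_mono_on hKI.integrableOn hKc.integrableOn hS
              intro z hz
              exact mul_le_mul_of_nonneg_left
                ((K_le_far hω hε hη hε2 (hSprop z hz).2).trans_eq (by rw [hCfdef]))
                (hρ0 z)
          _ = (∫ z in S, ρ z) * (ε * Cf) := by rw [integral_mul_const]
          _ ≤ M * (ε * Cf) := by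
              apply mul_le_mul_of_nonneg_right _ (by positivity)
              exact setIntegral_le_integral hρint (Eventually.of_forall hρ0)
          _ = ε * (Cf * M) := by ring
    have hS1 := hfarbound (Set.Iic a) measurableSet_Iic (by
      intro z hz
      have hza : z ≤ a := hz
      constructor
      · have ha0 : a < 0 := by rw [hadef]; linarith
        linarith
      · have : z + ω ^ 2 ≤ -η := by rw [hadef] at hza; linarith
        calc η ≤ -(z + ω ^ 2) := by linarith
          _ ≤ |z + ω ^ 2| := neg_le_abs _)
    have hS3 := hfarbound (Set.Ioc b 0) measurableSet_Ioc (by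
      intro z hz
      refine ⟨hz.2, ?_⟩
      have : η ≤ z + ω ^ 2 := by
        have hzb := hz.1
        rw [hbdef] at hzb
        linarith
      exact this.trans (le_abs_self _))
    -- near bound
    have hA2eq : A2 = ∫ z in a..b, ρ z * K ω ε z := by
      rw [hA2def, intervalIntegral.integral_of_le hab.le]
    have hnear : |A2 - ρ₀ * Iε| ≤ δ1 * Iε := by
      have hKab : IntervalIntegrable (fun z => ρ z * K ω ε z) volume a b :=
        hKI.intervalIntegrable
      have hcKab : IntervalIntegrable (fun z => ρ₀ * K ω ε z) volume a b :=
        (continuous_const.mul (K_continuous hω hε)).intervalIntegrable a b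
      have hsub0 : IntervalIntegrable (fun z => (ρ z - ρ₀) * K ω ε z) volume a b := by
        have heq : (fun z => (ρ z - ρ₀) * K ω ε z)
            = fun z => ρ z * K ω ε z - ρ₀ * K ω ε z := funext fun z => by ring
        rw [heq]; exact hKab.sub hcKab
      have hsubint : IntervalIntegrable (fun z => |(ρ z - ρ₀) * K ω ε z|) volume a b :=
        intervalIntegrable_iff.2 (intervalIntegrable_iff.1 hsub0).abs
      have hδKab : IntervalIntegrable (fun z => δ1 * K ω ε z) volume a b :=
        (continuous_const.mul (K_continuous hω hε)).intervalIntegrable a b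
      have hIc : ρ₀ * Iε = ∫ z in a..b, ρ₀ * K ω ε z := by
        rw [hIεdef, intervalIntegral.integral_const_mul]
      have hd : A2 - ρ₀ * Iε = ∫ z in a..b, (ρ z - ρ₀) * K ω ε z := by
        rw [hA2eq, hIc, ← intervalIntegral.integral_sub hKab hcKab]
        congr 1
        funext z
        ring
      rw [hd]
      calc |∫ z in a..b, (ρ z - ρ₀) * K ω ε z|
          ≤ ∫ z in a..b, |(ρ z - ρ₀) * K ω ε z| :=
            intervalIntegral.abs_integral_le_integral_abs hab.le
        _ ≤ ∫ z in a..b, δ1 * K ω ε z := by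
            apply intervalIntegral.integral_mono_on hab.le hsubint hδKab
            intro z hz
            have hz0 : z ≤ 0 := le_trans hz.2 hb0.le
            have hKnn := K_nonneg hω hε hz0
            rw [abs_mul, abs_of_nonneg hKnn]
            apply mul_le_mul_of_nonneg_right _ hKnn
            have hdist : dist z (-ω ^ 2) < η0 := by
              rw [Real.dist_eq, show z - (-ω ^ 2) = z + ω ^ 2 by ring]
              have h1 : a ≤ z := hz.1
              have h2 : z ≤ b := hz.2
              refine lt_of_le_of_lt (abs_le.2 ⟨?_, ?_⟩) hηη0
              · rw [hadef] at h1; linarith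
              · rw [hbdef] at h2; linarith
            have hρd := hη0 hdist
            rw [Real.dist_eq] at hρd
            exact hρd.le
        _ = δ1 * Iε := by rw [hIεdef, intervalIntegral.integral_const_mul]
    -- combine
    rw [Real.dist_eq, hsplit]
    have hmassterm : ρ₀ * abs (Iε - Real.pi * |ω|) ≤ δ / 3 := by
      have h1 : ρ₀ * abs (Iε - Real.pi * |ω|) ≤ ρ₀ * δ2 :=
        mul_le_mul_of_nonneg_left hIεδ2.le hρ₀
      have h2 : ρ₀ * δ2 ≤ (ρ₀ + 1) * δ2 := by nlinarith
      have h3 : (ρ₀ + 1) * δ2 = δ / 3 := by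
        rw [hδ2def]
        field_simp
      linarith
    have hnearterm : δ1 * Iε ≤ δ / 6 := by
      have h1 : δ1 * Iε ≤ δ1 * (Real.pi * |ω| + 1) :=
        mul_le_mul_of_nonneg_left hIεle hδ1.le
      have h2 : δ1 * (Real.pi * |ω| + 1) = δ / 6 := by
        rw [hδ1def]
        field_simp
      linarith
    have key : A1 + A2 + A3 - Real.pi * |ω| * ρ₀
        = (A1 + A3) + (A2 - ρ₀ * Iε) + ρ₀ * (Iε - Real.pi * |ω|) := by ring
    rw [key]
    calc |(A1 + A3) + (A2 - ρ₀ * Iε) + ρ₀ * (Iε - Real.pi * |ω|)|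
        ≤ |(A1 + A3) + (A2 - ρ₀ * Iε)| + abs (ρ₀ * (Iε - Real.pi * |ω|)) := abs_add_le _ _
      _ ≤ |A1 + A3| + |A2 - ρ₀ * Iε| + abs (ρ₀ * (Iε - Real.pi * |ω|)) := by
          have := abs_add_le (A1 + A3) (A2 - ρ₀ * Iε)
          linarith
      _ < δ := by
          have e1 : |A1 + A3| = A1 + A3 := abs_of_nonneg (by linarith [hS1.1, hS3.1])
          have e2 : abs (ρ₀ * (Iε - Real.pi * |ω|)) = ρ₀ * abs (Iε - Real.pi * |ω|) := by
            rw [abs_mul, abs_of_nonneg hρ₀]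
          rw [e1, e2]
          have := hS1.2
          have := hS3.2
          linarith
  · intro hpos
    have := Real.pi_pos
    positivity
end
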